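/- For every non-negative integer n and complex z: |P_n(z)| ≤ |z + √(z²-1)|^n, where the branch of the square root is chosen so that |z + √(z²-1)| ≥ 1. -/

import Mathlib

open Finset Complex

/-- Legendre polynomial of degree `n`, as a function on `ℂ`. -/
noncomputable def legendreP (n : ℕ) (z : ℂ) : ℂ :=
  (2 : ℂ) ^ (-(n : ℤ)) * ∑ k ∈ Finset.range (n / 2 + 1),
    (-1 : ℂ) ^ k * (n.choose k) * ((2 * n - 2 * k).choose n) * z ^ (n - 2 * k)

open Nat

local notation "cb" => Nat.centralBinom

section Aux
variable {K : Type*} [Field K] [CharZero K]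
lemma cb_rec_K (j : ℕ) : ((j:K)+1) * cb (j+1) = 2*(2*(j:K)+1) * cb j := by
  exact_mod_cast Nat.succ_mul_centralBinom_succ j

lemma cast_succ_ne (j : ℕ) : ((j:K) + 1) ≠ 0 := by
  have e : ((j:K)+1) = ((j+1 : ℕ) : K) := by push_cast; ring
  rw [e]
  exact Nat.cast_ne_zero.2 (Nat.succ_ne_zero j)

lemma cbPair (j m : ℕ) :
    ((j:K)+(m:K)+2) * (cb (j+1) * cb (m+1)) + 16*((j:K)+(m:K)+1) * (cb j * cb m)
    = 2*(2*((j:K)+(m:K))+3) * (cb (j+1) * cb m + cb j * cb (m+1)) := by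
  have hj := cb_rec_K (K := K) j
  have hm := cb_rec_K (K := K) m
  have hj1 : ((j:K)+1) ≠ 0 := cast_succ_ne j
  have hm1 : ((m:K)+1) ≠ 0 := cast_succ_ne m
  have hj' : (cb (j+1) : K) = 2*(2*(j:K)+1) * cb j / ((j:K)+1) := by
    rw [eq_div_iff hj1]; linear_combination hj
  have hm' : (cb (m+1) : K) = 2*(2*(m:K)+1) * cb m / ((m:K)+1) := by
    rw [eq_div_iff hm1]; linear_combination hm
  rw [hj', hm']
  field_simp
  ring

lemma Tid0 (n : ℕ) : ((n:K)+2) * ((n+2).choose 0 * ((2*(n+2) - 2*0).choose (n+2)))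
    = 2*(2*(n:K)+3) * ((n+1).choose 0 * ((2*(n+1) - 2*0).choose (n+1))) := by
  have h := cb_rec_K (K := K) (n+1)
  simp only [Nat.choose_zero_right, Nat.cast_one, one_mul, mul_zero, Nat.sub_zero]
  have e1 : (2*(n+2)).choose (n+2) = cb (n+2) := rfl
  have e2 : (2*(n+1)).choose (n+1) = cb (n+1) := rfl
  rw [e1, e2]
  push_cast at h ⊢
  linear_combination h

set_option maxHeartbeats 4000000 in
lemma Tid (n j : ℕ) :
    ((n:K)+2) * ((n+2).choose (j+1) * ((2*(n+2) - 2*(j+1)).choose (n+2)))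
    = 2*(2*(n:K)+3) * ((n+1).choose (j+1) * ((2*(n+1) - 2*(j+1)).choose (n+1)))
      + 4*((n:K)+1) * (n.choose j * ((2*n - 2*j).choose n)) := by
  rcases lt_trichotomy n (2*j) with hc | hc | hc
  · -- 2j > n : everything vanishes
    have e1 : (2*(n+2) - 2*(j+1)).choose (n+2) = 0 := Nat.choose_eq_zero_of_lt (by omega)
    have e2 : (2*(n+1) - 2*(j+1)).choose (n+1) = 0 := Nat.choose_eq_zero_of_lt (by omega)
    have e3 : (n.choose j) * ((2*n - 2*j).choose n) = 0 := by
      rcases le_or_gt j n with h | h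
      · have : (2*n - 2*j).choose n = 0 := Nat.choose_eq_zero_of_lt (by omega)
        rw [this, mul_zero]
      · rw [Nat.choose_eq_zero_of_lt h, zero_mul]
    have e3' : ((n.choose j : K)) * (((2*n - 2*j).choose n : ℕ) : K) = 0 := by exact_mod_cast e3
    rw [e1, e2]
    push_cast
    rw [e3']
    push_cast
    ring
  · -- n = 2j
    subst hc
    have e1 : 2*(2*j+2) - 2*(j+1) = 2*(j+1) := by omega
    have e2 : (2*(2*j+1)) - 2*(j+1) = 2*j := by omega
    have e3 : 2*(2*j) - 2*j = 2*j := by omega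
    have h1 : ((2*j+2).choose (j+1)) = cb (j+1) := by
      rw [show 2*j+2 = 2*(j+1) by ring]; rfl
    have h2 : (2*(2*j+2) - 2*(j+1)).choose (2*j+2) = 1 := by
      rw [e1, show (2*(j+1) : ℕ) = 2*j+2 by ring, Nat.choose_self]
    have h3 : (2*(2*j+1) - 2*(j+1)).choose (2*j+1) = 0 := by
      rw [e2]; exact Nat.choose_eq_zero_of_lt (by omega)
    have h4 : ((2*j).choose j) = cb j := rfl
    have h5 : (2*(2*j) - 2*j).choose (2*j) = 1 := by rw [e3, Nat.choose_self]
    rw [h1, h2, h3, h4, h5]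
    have h := cb_rec_K (K := K) j
    push_cast
    linear_combination 2 * h
  · -- 2j < n : main case, n = 2j + d + 1
    obtain ⟨d, rfl⟩ : ∃ d, n = 2*j + d + 1 := ⟨n - 2*j - 1, by omega⟩
    -- normalize the indices appearing in the goal
    rw [show 2*j+d+1+2 = 2*j+d+3 by omega, show 2*j+d+1+1 = 2*j+d+2 by omega,
        show 2*(2*j+d+3) - 2*(j+1) = 2*j+2*d+4 by omega,
        show 2*(2*j+d+2) - 2*(j+1) = 2*j+2*d+2 by omega,
        show 2*(2*j+d+1) - 2*j = 2*j+2*d+2 by omega]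
    -- factorial expansions (ℕ)
    have g1 : (2*j+2*d+4)! = (2*j+2*d+4)*((2*j+2*d+3)*(2*j+2*d+2)!) := by
      rw [show 2*j+2*d+4 = (2*j+2*d+3)+1 by ring, Nat.factorial_succ,
          show 2*j+2*d+3 = (2*j+2*d+2)+1 by ring, Nat.factorial_succ]
    have g2 : (j+1)! = (j+1)*j ! := Nat.factorial_succ j
    have g3 : (d+1)! = (d+1)*d ! := Nat.factorial_succ d
    have g4 : (j+d+2)! = (j+d+2)*(j+d+1)! := by
      rw [show j+d+2 = (j+d+1)+1 by ring, Nat.factorial_succ]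
    have g5 : (2*j+d+2)! = (2*j+d+2)*(2*j+d+1)! := by
      rw [show 2*j+d+2 = (2*j+d+1)+1 by ring, Nat.factorial_succ]
    have g6 : (2*j+d+3)! = (2*j+d+3)*((2*j+d+2)*(2*j+d+1)!) := by
      rw [show 2*j+d+3 = (2*j+d+2)+1 by ring, Nat.factorial_succ, g5]
    -- choose × factorials = factorial, in multiplied-out (division-free) form
    have mA : (2*j+d+3).choose (j+1) * ((j+1)*j !) * ((j+d+2)*(j+d+1)!)
        = (2*j+d+3)*((2*j+d+2)*(2*j+d+1)!) := by
      have h := Nat.choose_mul_factorial_mul_factorial (show j+1 ≤ 2*j+d+3 by omega)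
      rw [show 2*j+d+3 - (j+1) = j+d+2 by omega, g2, g4, g6] at h
      exact h
    have mB : (2*j+2*d+4).choose (2*j+d+3) * ((2*j+d+3)*((2*j+d+2)*(2*j+d+1)!)) * ((d+1)*d !)
        = (2*j+2*d+4)*((2*j+2*d+3)*(2*j+2*d+2)!) := by
      have h := Nat.choose_mul_factorial_mul_factorial (show 2*j+d+3 ≤ 2*j+2*d+4 by omega)
      rw [show 2*j+2*d+4 - (2*j+d+3) = d+1 by omega, g6, g3, g1] at h
      exact h
    have mC : (2*j+d+2).choose (j+1) * ((j+1)*j !) * (j+d+1)!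
        = (2*j+d+2)*(2*j+d+1)! := by
      have h := Nat.choose_mul_factorial_mul_factorial (show j+1 ≤ 2*j+d+2 by omega)
      rw [show 2*j+d+2 - (j+1) = j+d+1 by omega, g2, g5] at h
      exact h
    have mD : (2*j+2*d+2).choose (2*j+d+2) * ((2*j+d+2)*(2*j+d+1)!) * d !
        = (2*j+2*d+2)! := by
      have h := Nat.choose_mul_factorial_mul_factorial (show 2*j+d+2 ≤ 2*j+2*d+2 by omega)
      rw [show 2*j+2*d+2 - (2*j+d+2) = d by omega, g5] at h
      exact h
    have mE : (2*j+d+1).choose j * j ! * (j+d+1)! = (2*j+d+1)! := by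
      have h := Nat.choose_mul_factorial_mul_factorial (show j ≤ 2*j+d+1 by omega)
      rw [show 2*j+d+1 - j = j+d+1 by omega] at h
      exact h
    have mF : (2*j+2*d+2).choose (2*j+d+1) * (2*j+d+1)! * ((d+1)*d !)
        = (2*j+2*d+2)! := by
      have h := Nat.choose_mul_factorial_mul_factorial (show 2*j+d+1 ≤ 2*j+2*d+2 by omega)
      rw [show 2*j+2*d+2 - (2*j+d+1) = d+1 by omega, g3] at h
      exact h
    -- cast all to K
    have mAK := congrArg (Nat.cast : ℕ → K) mA
    have mBK := congrArg (Nat.cast : ℕ → K) mB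
    have mCK := congrArg (Nat.cast : ℕ → K) mC
    have mDK := congrArg (Nat.cast : ℕ → K) mD
    have mEK := congrArg (Nat.cast : ℕ → K) mE
    have mFK := congrArg (Nat.cast : ℕ → K) mF
    push_cast at mAK mBK mCK mDK mEK mFK ⊢
    -- denominators
    set fj : K := (j ! : K) with hfj
    set fd : K := (d ! : K) with hfd
    set f1 : K := ((j+d+1)! : K) with hf1
    set f2 : K := ((2*j+d+1)! : K) with hf2
    set f3 : K := ((2*j+2*d+2)! : K) with hf3
    have nzf : ∀ m : ℕ, ((m ! : ℕ) : K) ≠ 0 := fun m => Nat.cast_ne_zero.2 (Nat.factorial_ne_zero m)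
    have hfj0 : fj ≠ 0 := nzf j
    have hfd0 : fd ≠ 0 := nzf d
    have hf10 : f1 ≠ 0 := nzf (j+d+1)
    have hf20 : f2 ≠ 0 := nzf (2*j+d+1)
    have hf30 : f3 ≠ 0 := nzf (2*j+2*d+2)
    have hnum : ∀ m : ℕ, m ≠ 0 → ((m : ℕ) : K) ≠ 0 := fun m hm => Nat.cast_ne_zero.2 hm
    have A1 : ((j:K)+1) ≠ 0 := by exact_mod_cast hnum (j+1) (by omega)
    have A3 : ((j:K)+(d:K)+2) ≠ 0 := by
      have := hnum (j+d+2) (by omega); push_cast at this; exact this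
    have A5 : (2*(j:K)+(d:K)+3) ≠ 0 := by
      have := hnum (2*j+d+3) (by omega); push_cast at this; exact this
    have A6 : (2*(j:K)+(d:K)+2) ≠ 0 := by
      have := hnum (2*j+d+2) (by omega); push_cast at this; exact this
    have A8 : ((d:K)+1) ≠ 0 := by exact_mod_cast hnum (d+1) (by omega)
    -- denominator bundles
    apply mul_left_cancel₀ (a :=
      (((j:K)+1)*fj*(((j:K)+(d:K)+2)*f1))              -- dA
      * ((2*(j:K)+(d:K)+3)*((2*(j:K)+(d:K)+2)*f2)*(((d:K)+1)*fd))  -- dB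
      * (((j:K)+1)*fj*f1)                              -- dC
      * ((2*(j:K)+(d:K)+2)*f2*fd)                      -- dD
      * (fj*f1)                                        -- dE
      * (f2*(((d:K)+1)*fd)))                           -- dF
    · apply_rules [mul_ne_zero]
    · have pAB := congrArg₂ (fun x y : K => x * y) mAK mBK
      have pCD := congrArg₂ (fun x y : K => x * y) mCK mDK
      have pEF := congrArg₂ (fun x y : K => x * y) mEK mFK
      linear_combination
        ((2*(j:K)+(d:K)+1)+2) * ((((j:K)+1)*fj*f1) * ((2*(j:K)+(d:K)+2)*f2*fd) * (fj*f1) * (f2*(((d:K)+1)*fd))) * pAB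
        - (2*(2*(2*(j:K)+(d:K)+1)+3)) * ((((j:K)+1)*fj*(((j:K)+(d:K)+2)*f1)) * ((2*(j:K)+(d:K)+3)*((2*(j:K)+(d:K)+2)*f2)*(((d:K)+1)*fd)) * (fj*f1) * (f2*(((d:K)+1)*fd))) * pCD
        - (4*((2*(j:K)+(d:K)+1)+1)) * ((((j:K)+1)*fj*(((j:K)+(d:K)+2)*f1)) * ((2*(j:K)+(d:K)+3)*((2*(j:K)+(d:K)+2)*f2)*(((d:K)+1)*fd)) * (((j:K)+1)*fj*f1) * ((2*(j:K)+(d:K)+2)*f2*fd)) * pEF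

end Aux
lemma cb_rec_Q (j : ℕ) : ((j:ℚ)+1) * cb (j+1) = 2*(2*j+1) * cb j := by
  exact_mod_cast Nat.succ_mul_centralBinom_succ j

lemma sumB_Q (n : ℕ) : ∑ k ∈ range (n+1), (cb k * cb (n-k) : ℚ) = 4^n := by
  induction n with
  | zero => simp
  | succ n ih =>
    have h1 : ∑ k ∈ range (n+2), (k:ℚ) * cb k * cb (n+1-k)
        = 2 * ∑ j ∈ range (n+1), (2*(j:ℚ)+1) * cb j * cb (n-j) := by
      rw [Finset.sum_range_succ', Finset.mul_sum]
      simp only [Nat.cast_zero, zero_mul, add_zero]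
      refine Finset.sum_congr rfl fun j hj => ?_
      rw [Finset.mem_range] at hj
      have e : n + 1 - (j+1) = n - j := by omega
      rw [e]
      have := cb_rec_Q j
      push_cast
      nlinarith [this]
    have h2 : ∑ k ∈ range (n+2), ((n+1-k : ℕ):ℚ) * cb k * cb (n+1-k)
        = ∑ k ∈ range (n+2), (k:ℚ) * cb k * cb (n+1-k) := by
      rw [← Finset.sum_range_reflect (fun k => ((n+1-k : ℕ):ℚ) * cb k * cb (n+1-k)) (n+2)]
      refine Finset.sum_congr rfl fun k hk => ?_
      rw [Finset.mem_range] at hk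
      rw [show n + 2 - 1 - k = n + 1 - k from by omega,
          show n + 1 - (n + 1 - k) = k from by omega]
      ring
    have hr : ∑ j ∈ range (n+1), (2*((n-j:ℕ):ℚ)+1) * cb j * cb (n-j)
        = ∑ j ∈ range (n+1), (2*(j:ℚ)+1) * cb j * cb (n-j) := by
      rw [← Finset.sum_range_reflect (fun j => (2*((n-j:ℕ):ℚ)+1) * cb j * cb (n-j)) (n+1)]
      refine Finset.sum_congr rfl fun k hk => ?_
      rw [Finset.mem_range] at hk
      rw [show n + 1 - 1 - k = n - k from by omega,
          show n - (n - k) = k from by omega]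
      ring
    have h4 : 2 * ∑ j ∈ range (n+1), (2*(j:ℚ)+1) * cb j * cb (n-j)
        = ((n:ℚ)+1) * 2 * 4 ^ n := by
      have hsum : (∑ j ∈ range (n+1), (2*(j:ℚ)+1) * cb j * cb (n-j))
           + ∑ j ∈ range (n+1), (2*((n-j:ℕ):ℚ)+1) * cb j * cb (n-j)
           = (2*(n:ℚ)+2) * ∑ j ∈ range (n+1), (cb j * cb (n-j) : ℚ) := by
        rw [Finset.mul_sum, ← Finset.sum_add_distrib]
        refine Finset.sum_congr rfl fun j hj => ?_
        rw [Finset.mem_range] at hj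
        have e : ((n-j:ℕ):ℚ) = (n:ℚ) - j := by rw [Nat.cast_sub (by omega)]
        rw [e]; ring
      rw [hr, ih] at hsum
      linear_combination hsum
    have h3 : ((n:ℚ)+2) * ∑ k ∈ range (n+2), (cb k * cb (n+1-k) : ℚ)
        = (∑ k ∈ range (n+2), (k:ℚ) * cb k * cb (n+1-k))
          + (∑ k ∈ range (n+2), ((n+1-k : ℕ):ℚ) * cb k * cb (n+1-k))
          + ∑ k ∈ range (n+2), (cb k * cb (n+1-k) : ℚ) := by
      rw [Finset.mul_sum, ← Finset.sum_add_distrib, ← Finset.sum_add_distrib]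
      refine Finset.sum_congr rfl fun k hk => ?_
      rw [Finset.mem_range] at hk
      have e : ((n+1-k:ℕ):ℚ) = (n:ℚ)+1-k := by rw [Nat.cast_sub (by omega)]; push_cast; ring
      rw [e]; ring
    rw [h2, h1, h4] at h3
    have hn1 : ((n:ℚ)+1) ≠ 0 := by positivity
    apply mul_left_cancel₀ hn1
    linear_combination h3

lemma sumB_nat (n : ℕ) : ∑ k ∈ range (n+1), cb k * cb (n-k) = 4^n := by
  have := sumB_Q n
  exact_mod_cast (by push_cast at this ⊢; exact this : ((∑ k ∈ range (n+1), cb k * cb (n-k) : ℕ) : ℚ) = ((4^n : ℕ) : ℚ))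

/-- The sum in `legendreP`, extended to `range (n+1)` (extra terms vanish). -/
noncomputable def LS (n : ℕ) (z : ℂ) : ℂ :=
  ∑ k ∈ Finset.range (n+1),
    (-1 : ℂ) ^ k * (n.choose k) * ((2 * n - 2 * k).choose n) * z ^ (n - 2 * k)

lemma legendreP_eq (n : ℕ) (z : ℂ) : legendreP n z = (2:ℂ) ^ (-(n : ℤ)) * LS n z := by
  unfold legendreP LS
  congr 1
  apply Finset.sum_subset
  · intro x hx
    rw [Finset.mem_range] at *
    omega
  · intro k hk hk2
    rw [Finset.mem_range] at hk hk2
    have h0 : (2*n - 2*k).choose n = 0 := Nat.choose_eq_zero_of_lt (by omega)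
    rw [h0]
    push_cast
    ring

/-- The "Laplace" expansion sum. -/
noncomputable def Sfn (u v : ℂ) (n : ℕ) : ℂ :=
  ∑ k ∈ Finset.range (n+1), ((Nat.centralBinom k : ℂ) * (Nat.centralBinom (n-k) : ℂ)) * u^(n-k) * v^k

lemma LS_rec (n : ℕ) (z : ℂ) :
    ((n:ℂ)+2) * LS (n+2) z = 2*(2*(n:ℂ)+3) * (z * LS (n+1) z) - 4*((n:ℂ)+1) * LS n z := by
  have B2 : LS (n+2) z
      = (∑ k ∈ Finset.range (n+2),
          (-1:ℂ)^(k+1) * ((n+2).choose (k+1)) * ((2*(n+2) - 2*(k+1)).choose (n+2)) * z^(n-2*k))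
        + (((2*(n+2)).choose (n+2) : ℕ) : ℂ) * z^(n+2) := by
    unfold LS
    rw [Finset.sum_range_succ']
    congr 1
    · refine Finset.sum_congr rfl fun k hk => ?_
      rw [show n+2 - 2*(k+1) = n - 2*k by omega]
    · simp
  have B0 : LS n z
      = ∑ k ∈ Finset.range (n+2),
          (-1:ℂ)^k * (n.choose k) * ((2*n - 2*k).choose n) * z^(n-2*k) := by
    unfold LS
    conv_rhs => rw [Finset.sum_range_succ]
    have h0 : n.choose (n+1) = 0 := Nat.choose_eq_zero_of_lt (by omega)
    rw [h0]
    push_cast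
    ring
  have B1 : z * LS (n+1) z
      = (∑ k ∈ Finset.range (n+2),
          (-1:ℂ)^(k+1) * ((n+1).choose (k+1)) * ((2*(n+1) - 2*(k+1)).choose (n+1)) * z^(n-2*k))
        + (((2*(n+1)).choose (n+1) : ℕ) : ℂ) * z^(n+2) := by
    have pad : LS (n+1) z = ∑ k ∈ Finset.range (n+3),
        (-1:ℂ)^k * ((n+1).choose k) * ((2*(n+1) - 2*k).choose (n+1)) * z^(n+1-2*k) := by
      unfold LS
      conv_rhs => rw [Finset.sum_range_succ]
      have h0 : (n+1).choose (n+2) = 0 := Nat.choose_eq_zero_of_lt (by omega)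
      rw [h0]
      push_cast
      ring
    rw [pad, Finset.mul_sum, Finset.sum_range_succ']
    congr 1
    · refine Finset.sum_congr rfl fun k hk => ?_
      rw [Finset.mem_range] at hk
      rcases le_or_gt (2*k+1) n with hle | hgt
      · rw [show n+1 - 2*(k+1) = n - 2*k - 1 by omega]
        conv_rhs => rw [show n - 2*k = (n - 2*k - 1) + 1 by omega, pow_succ]
        ring
      · have h1 : ((2*(n+1) - 2*(k+1)).choose (n+1)) = 0 := Nat.choose_eq_zero_of_lt (by omega)
        rw [h1]
        push_cast
        ring
    · rw [show n+1 - 2*0 = n+1 by omega, show n+2 = (n+1)+1 by ring, pow_succ,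
          show 2*(n+1) - 2*0 = 2*(n+1) by omega, Nat.choose_zero_right]
      push_cast
      ring
  have bd : ((n:ℂ)+2) * (((2*(n+2)).choose (n+2) : ℕ) : ℂ)
      = 2*(2*(n:ℂ)+3) * (((2*(n+1)).choose (n+1) : ℕ) : ℂ) := by
    have h := Nat.succ_mul_centralBinom_succ (n+1)
    have h' : (n+2) * (2*(n+2)).choose (n+2) = 2*(2*n+3) * (2*(n+1)).choose (n+1) := by
      unfold Nat.centralBinom at h
      convert h using 2 <;> omega
    exact_mod_cast h'
  have interior :
      ((n:ℂ)+2) * (∑ k ∈ Finset.range (n+2),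
          (-1:ℂ)^(k+1) * ((n+2).choose (k+1)) * ((2*(n+2) - 2*(k+1)).choose (n+2)) * z^(n-2*k))
      + 4*((n:ℂ)+1) * (∑ k ∈ Finset.range (n+2),
          (-1:ℂ)^k * (n.choose k) * ((2*n - 2*k).choose n) * z^(n-2*k))
      = 2*(2*(n:ℂ)+3) * (∑ k ∈ Finset.range (n+2),
          (-1:ℂ)^(k+1) * ((n+1).choose (k+1)) * ((2*(n+1) - 2*(k+1)).choose (n+1)) * z^(n-2*k)) := by
    rw [Finset.mul_sum, Finset.mul_sum, Finset.mul_sum, ← Finset.sum_add_distrib]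
    refine Finset.sum_congr rfl fun k hk => ?_
    have t := Tid (K := ℂ) n k
    push_cast at t ⊢
    linear_combination ((-1:ℂ))^(k+1) * z^(n-2*k) * t
  rw [B2, B1, B0]
  linear_combination interior + z^(n+2) * bd

lemma Sfn_rec (u v : ℂ) (huv : u * v = 1) (n : ℕ) :
    ((n:ℂ)+2) * Sfn u v (n+2)
      = 2*(2*(n:ℂ)+3) * ((u+v) * Sfn u v (n+1)) - 16*((n:ℂ)+1) * Sfn u v n := by
  have hG2 : Sfn u v (n+2)
      = (∑ k ∈ Finset.range (n+1),
          ((Nat.centralBinom (k+1) : ℂ) * (Nat.centralBinom (n+1-k) : ℂ)) * u^(n+1-k) * v^(k+1))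
        + (Nat.centralBinom (n+2) : ℂ) * u^(n+2) + (Nat.centralBinom (n+2) : ℂ) * v^(n+2) := by
    unfold Sfn
    rw [Finset.sum_range_succ, Finset.sum_range_succ']
    congr 1
    congr 1
    · refine Finset.sum_congr rfl fun k hk => ?_
      rw [show n+2 - (k+1) = n+1-k by omega]
    · simp
    · simp
  have hG1a : u * Sfn u v (n+1)
      = (Nat.centralBinom (n+1) : ℂ) * u^(n+2)
        + ∑ k ∈ Finset.range (n+1),
            ((Nat.centralBinom (k+1) : ℂ) * (Nat.centralBinom (n-k) : ℂ)) * u^(n+1-k) * v^(k+1) := by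
    unfold Sfn
    rw [Finset.mul_sum]
    have e : ∀ k ∈ Finset.range (n+2),
        u * (((Nat.centralBinom k : ℂ) * (Nat.centralBinom (n+1-k) : ℂ)) * u^(n+1-k) * v^k)
        = ((Nat.centralBinom k : ℂ) * (Nat.centralBinom (n+1-k) : ℂ)) * u^(n+2-k) * v^k := by
      intro k hk
      rw [Finset.mem_range] at hk
      rw [show n+2-k = (n+1-k)+1 by omega, pow_succ]
      ring
    rw [Finset.sum_congr rfl e, Finset.sum_range_succ']
    rw [show (∑ k ∈ Finset.range (n+1),
        ((Nat.centralBinom (k+1) : ℂ) * (Nat.centralBinom (n+1-(k+1)) : ℂ)) * u^(n+2-(k+1)) * v^(k+1))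
        = ∑ k ∈ Finset.range (n+1),
        ((Nat.centralBinom (k+1) : ℂ) * (Nat.centralBinom (n-k) : ℂ)) * u^(n+1-k) * v^(k+1) from
      Finset.sum_congr rfl fun k hk => by
        rw [show n+1-(k+1) = n-k by omega, show n+2-(k+1) = n+1-k by omega]]
    simp [add_comm]
  have hG1b : v * Sfn u v (n+1)
      = (∑ k ∈ Finset.range (n+1),
          ((Nat.centralBinom k : ℂ) * (Nat.centralBinom (n+1-k) : ℂ)) * u^(n+1-k) * v^(k+1))
        + (Nat.centralBinom (n+1) : ℂ) * v^(n+2) := by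
    unfold Sfn
    rw [Finset.mul_sum, Finset.sum_range_succ]
    congr 1
    · refine Finset.sum_congr rfl fun k hk => ?_
      ring
    · rw [show n+1-(n+1) = 0 by omega, show n+2 = (n+1)+1 by ring, pow_succ, pow_zero]
      simp
      ring
  have hG0 : Sfn u v n
      = ∑ k ∈ Finset.range (n+1),
          ((Nat.centralBinom k : ℂ) * (Nat.centralBinom (n-k) : ℂ)) * u^(n+1-k) * v^(k+1) := by
    unfold Sfn
    refine Finset.sum_congr rfl fun k hk => ?_
    rw [Finset.mem_range] at hk
    rw [show n+1-k = (n-k)+1 by omega, pow_succ, pow_succ]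
    calc ((Nat.centralBinom k : ℂ) * (Nat.centralBinom (n-k) : ℂ)) * u^(n-k) * v^k
        = ((Nat.centralBinom k : ℂ) * (Nat.centralBinom (n-k) : ℂ)) * u^(n-k) * v^k * (u * v) := by
          rw [huv]; ring
      _ = ((Nat.centralBinom k : ℂ) * (Nat.centralBinom (n-k) : ℂ)) * (u^(n-k)*u) * (v^k*v) := by
          ring
  have bd : ((n:ℂ)+2) * (Nat.centralBinom (n+2) : ℂ)
      = 2*(2*(n:ℂ)+3) * (Nat.centralBinom (n+1) : ℂ) := by
    have h := Nat.succ_mul_centralBinom_succ (n+1)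
    have h' : (n+2) * Nat.centralBinom (n+2) = 2*(2*n+3) * Nat.centralBinom (n+1) := by
      convert h using 2 <;> omega
    exact_mod_cast h'
  have interior :
      ((n:ℂ)+2) * (∑ k ∈ Finset.range (n+1),
          ((Nat.centralBinom (k+1) : ℂ) * (Nat.centralBinom (n+1-k) : ℂ)) * u^(n+1-k) * v^(k+1))
      + 16*((n:ℂ)+1) * (∑ k ∈ Finset.range (n+1),
          ((Nat.centralBinom k : ℂ) * (Nat.centralBinom (n-k) : ℂ)) * u^(n+1-k) * v^(k+1))
      = 2*(2*(n:ℂ)+3) * (∑ k ∈ Finset.range (n+1),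
          ((Nat.centralBinom (k+1) : ℂ) * (Nat.centralBinom (n-k) : ℂ)) * u^(n+1-k) * v^(k+1))
      + 2*(2*(n:ℂ)+3) * (∑ k ∈ Finset.range (n+1),
          ((Nat.centralBinom k : ℂ) * (Nat.centralBinom (n+1-k) : ℂ)) * u^(n+1-k) * v^(k+1)) := by
    rw [Finset.mul_sum, Finset.mul_sum, Finset.mul_sum, Finset.mul_sum,
        ← Finset.sum_add_distrib, ← Finset.sum_add_distrib]
    refine Finset.sum_congr rfl fun k hk => ?_
    rw [Finset.mem_range] at hk
    have t := cbPair (K := ℂ) k (n-k)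
    rw [show (n-k)+1 = n+1-k by omega] at t
    have e2 : ((n-k : ℕ) : ℂ) = (n:ℂ) - k := by
      rw [Nat.cast_sub (by omega)]
    rw [e2] at t
    linear_combination (u^(n+1-k) * v^(k+1)) * t
  have split : (u+v) * Sfn u v (n+1) = u * Sfn u v (n+1) + v * Sfn u v (n+1) := by ring
  rw [hG2, split, hG1a, hG1b, hG0]
  linear_combination interior + (u^(n+2) + v^(n+2)) * bd

lemma legendreP_rec (n : ℕ) (z : ℂ) :
    ((n:ℂ)+2) * legendreP (n+2) z
      = (2*(n:ℂ)+3) * (z * legendreP (n+1) z) - ((n:ℂ)+1) * legendreP n z := by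
  have e2 : legendreP (n+2) z = (2:ℂ)^(-((n:ℤ)+2)) * LS (n+2) z := by
    rw [legendreP_eq]
    norm_num
  have e1 : legendreP (n+1) z = 2 * (2:ℂ)^(-((n:ℤ)+2)) * LS (n+1) z := by
    rw [legendreP_eq]
    have : (2:ℂ)^(-((n:ℤ)+1)) = 2 * (2:ℂ)^(-((n:ℤ)+2)) := by
      rw [show -((n:ℤ)+1) = 1 + -((n:ℤ)+2) by ring, zpow_add₀ (two_ne_zero)]
      norm_num
    rw [show -(((n:ℕ)+1 : ℕ):ℤ) = -((n:ℤ)+1) by push_cast; ring, this]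
  have e0 : legendreP n z = 4 * (2:ℂ)^(-((n:ℤ)+2)) * LS n z := by
    rw [legendreP_eq]
    have : (2:ℂ)^(-(n:ℤ)) = 4 * (2:ℂ)^(-((n:ℤ)+2)) := by
      rw [show -(n:ℤ) = 2 + -((n:ℤ)+2) by ring, zpow_add₀ (two_ne_zero)]
      norm_num
    rw [this]
  rw [e2, e1, e0]
  linear_combination (2:ℂ)^(-((n:ℤ)+2)) * LS_rec n z

lemma main_id (z w : ℂ) (huv : (z+w) * (z-w) = 1) : ∀ n : ℕ,
    (4:ℂ)^n * legendreP n z = Sfn (z+w) (z-w) n := by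
  intro n
  induction n using Nat.twoStepInduction with
  | zero =>
    unfold legendreP Sfn
    norm_num [Nat.centralBinom]
  | one =>
    unfold legendreP Sfn
    norm_num [Nat.centralBinom, Finset.sum_range_succ]
    ring
  | more n hn hn1 =>
    have hlp := legendreP_rec n z
    have hsf := Sfn_rec (z+w) (z-w) huv n
    have hcan : ((n:ℂ)+2) ≠ 0 := by
      have h := Nat.cast_ne_zero (R := ℂ).2 (show n+2 ≠ 0 by omega)
      push_cast at h
      exact h
    apply mul_left_cancel₀ hcan
    have c2 : ((((n:ℕ)+2 : ℕ)):ℂ) = (n:ℂ)+2 := by push_cast; ring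
    rw [show ((n+2 : ℕ):ℂ) = (n:ℂ)+2 from c2] at *
    linear_combination (4:ℂ)^(n+2) * hlp - hsf + (4*(2*(n:ℂ)+3)*z) * hn1 - (16*((n:ℂ)+1)) * hn

theorem legendre_bound (n : ℕ) (z w : ℂ) (hw : w ^ 2 = z ^ 2 - 1)
    (hbranch : 1 ≤ ‖z + w‖) :
    ‖legendreP n z‖ ≤ ‖z + w‖ ^ n := by
  have huv : (z+w) * (z-w) = 1 := by linear_combination -hw
  have hid := main_id z w huv n
  set u := z + w with hu
  set v := z - w with hv
  have habs : ‖u‖ * ‖v‖ = 1 := by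
    rw [← norm_mul, huv, norm_one]
  have hvle : ‖v‖ ≤ 1 := by
    nlinarith [norm_nonneg v, norm_nonneg u]
  have hbound : ‖Sfn u v n‖ ≤ 4^n * ‖u‖ ^ n := by
    calc ‖Sfn u v n‖
        ≤ ∑ k ∈ Finset.range (n+1), ‖(((Nat.centralBinom k : ℂ) * (Nat.centralBinom (n-k) : ℂ)) * u^(n-k) * v^k)‖ := by
          unfold Sfn
          exact norm_sum_le _ _
      _ ≤ ∑ k ∈ Finset.range (n+1),
            (Nat.centralBinom k * Nat.centralBinom (n-k) : ℝ) * ‖u‖ ^ n := by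
          refine Finset.sum_le_sum fun k hk => ?_
          rw [Finset.mem_range] at hk
          simp only [norm_mul, norm_pow, Complex.norm_natCast]
          have h1 : ‖u‖ ^ (n-k) ≤ ‖u‖ ^ n :=
            pow_le_pow_right₀ hbranch (by omega)
          have h2 : ‖v‖ ^ k ≤ 1 :=
            pow_le_one₀ (norm_nonneg v) hvle
          have hnn : (0:ℝ) ≤ (Nat.centralBinom k * Nat.centralBinom (n-k) : ℝ) := by positivity
          calc (Nat.centralBinom k : ℝ) * (Nat.centralBinom (n-k) : ℝ)
                * ‖u‖ ^ (n-k) * ‖v‖ ^ k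
              ≤ (Nat.centralBinom k : ℝ) * (Nat.centralBinom (n-k) : ℝ)
                * ‖u‖ ^ n * 1 := by
                apply mul_le_mul
                · apply mul_le_mul_of_nonneg_left h1 (by positivity)
                · exact h2
                · positivity
                · positivity
            _ = (Nat.centralBinom k * Nat.centralBinom (n-k) : ℝ) * ‖u‖ ^ n := by
                push_cast; ring
      _ = (∑ k ∈ Finset.range (n+1), (Nat.centralBinom k * Nat.centralBinom (n-k) : ℝ))
            * ‖u‖ ^ n := by
          rw [← Finset.sum_mul]
      _ = 4^n * ‖u‖ ^ n := by
          have := sumB_nat n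
          have hc : (∑ k ∈ Finset.range (n+1), (Nat.centralBinom k * Nat.centralBinom (n-k) : ℝ))
              = ((4:ℝ))^n := by
            exact_mod_cast congrArg (Nat.cast : ℕ → ℝ) this
          rw [hc]
  have hlhs : ‖(4:ℂ)^n * legendreP n z‖ = 4^n * ‖legendreP n z‖ := by
    rw [norm_mul, norm_pow]
    norm_num
  have : (4:ℝ)^n * ‖legendreP n z‖ ≤ 4^n * ‖u‖ ^ n := by
    rw [← hlhs, hid]
    exact hbound
  have h4pos : (0:ℝ) < 4^n := by positivity
  exact (mul_le_mul_iff_right₀ h4pos).mp this
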